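/- Let G = (S,E) be a graph and let w, w' be injective words with c(w) = c(w') = σ such that D_w = D_{w'}. Then w and w' belong to the same commutation class, i.e., w' can be obtained from w by a sequence of adjacent transpositions of letters not joined by an edge of G. -/

import Mathlib

/-- The digraph `D_w` associated to a word `w` and a graph `G`. -/
def Dw {S : Type*} (G : SimpleGraph S) (w : List S) : S → S → Prop :=
  fun a b => G.Adj a b ∧ [a, b].Sublist w

/-- A single commutation step: swap two adjacent letters not joined by an
edge of `G`. -/
def CommStep {S : Type*} (G : SimpleGraph S) (w w' : List S) : Prop :=
  ∃ (u v : List S) (s s' : S), ¬ G.Adj s s' ∧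
    w = u ++ s :: s' :: v ∧ w' = u ++ s' :: s :: v

private lemma commStep_cons {S : Type*} (G : SimpleGraph S) {t t' : List S} (a : S)
    (h : CommStep G t t') : CommStep G (a :: t) (a :: t') := by
  obtain ⟨u, v, s, s', hns, h1, h2⟩ := h
  exact ⟨a :: u, v, s, s', hns, by simp [h1], by simp [h2]⟩

private lemma eqvGen_cons {S : Type*} (G : SimpleGraph S) {t t' : List S} (a : S)
    (h : Relation.EqvGen (CommStep G) t t') :
    Relation.EqvGen (CommStep G) (a :: t) (a :: t') := by
  induction h with
  | rel x y hxy => exact Relation.EqvGen.rel _ _ (commStep_cons G a hxy)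
  | refl x => exact Relation.EqvGen.refl _
  | symm x y _ ih => exact ih.symm
  | trans x y z _ _ ih1 ih2 => exact ih1.trans _ _ _ ih2

private lemma move_front {S : Type*} (G : SimpleGraph S) (a : S) :
    ∀ (u v : List S), (∀ b ∈ u, ¬ G.Adj a b) →
      Relation.EqvGen (CommStep G) (u ++ a :: v) (a :: (u ++ v))
  | [], v, _ => Relation.EqvGen.refl _
  | b :: u, v, h => by
    have ih := move_front G a u v (fun c hc => h c (List.mem_cons_of_mem _ hc))
    have step1 : Relation.EqvGen (CommStep G) (b :: (u ++ a :: v)) (b :: a :: (u ++ v)) :=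
      eqvGen_cons G b ih
    have step2 : CommStep G (b :: a :: (u ++ v)) (a :: b :: (u ++ v)) :=
      ⟨[], u ++ v, b, a, fun hadj => h b (List.mem_cons_self) hadj.symm, rfl, rfl⟩
    exact (step1.trans _ _ _ (Relation.EqvGen.rel _ _ step2))

private lemma sublist_of_cons_of_not_mem {S : Type*} {l m : List S} {a : S}
    (h : l.Sublist (a :: m)) (ha : a ∉ l) : l.Sublist m := by
  cases h with
  | cons _ h => exact h
  | cons_cons _ h => exact absurd (List.mem_cons_self) ha

private lemma sublist_of_middle {S : Type*} {l u v : List S} {a : S}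
    (h : l.Sublist (u ++ a :: v)) (ha : a ∉ l) : l.Sublist (u ++ v) := by
  rw [List.sublist_append_iff] at h ⊢
  obtain ⟨l₁, l₂, rfl, h1, h2⟩ := h
  refine ⟨l₁, l₂, rfl, h1, sublist_of_cons_of_not_mem h2 ?_⟩
  exact fun hm => ha (List.mem_append_right _ hm)

/-- Two injective words with the same content and the same induced digraph
belong to the same commutation class. -/
theorem eqvGen_of_Dw_eq {S : Type*} [DecidableEq S] (G : SimpleGraph S)
    (w w' : List S) (hw : w.Nodup) (hw' : w'.Nodup)
    (hc : w.toFinset = w'.toFinset) (hD : Dw G w = Dw G w') :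
    Relation.EqvGen (CommStep G) w w' := by
  induction w generalizing w' with
  | nil =>
    have : w' = [] := by
      rcases w' with _ | ⟨b, t⟩
      · rfl
      · exfalso
        have : b ∈ ([] : List S).toFinset := by
          rw [hc]; simp
        simp at this
    rw [this]; exact Relation.EqvGen.refl _
  | cons a t ih =>
    have ha_t : a ∉ t := (List.nodup_cons.mp hw).1
    have ht : t.Nodup := (List.nodup_cons.mp hw).2
    have haw' : a ∈ w' := by
      have : a ∈ w'.toFinset := by rw [← hc]; simp
      simpa using this
    obtain ⟨u, v, rfl⟩ := List.append_of_mem haw'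
    have hd := List.nodup_append'.mp hw'
    have hau1 : a ∉ u := fun h => (hd.2.2 h) (List.mem_cons_self)
    have hau2 : a ∉ v := (List.nodup_cons.mp hd.2.1).1
    have hauv : a ∉ u ++ v := by simp [hau1, hau2]
    have huv : (u ++ v).Nodup := by
      have : (u ++ v).Sublist (u ++ a :: v) :=
        List.Sublist.append_left (List.sublist_cons_self a v) u
      exact this.nodup hw'
    -- pointwise version of hD
    have hDp : ∀ x y, Dw G (a :: t) x y ↔ Dw G (u ++ a :: v) x y := by
      intro x y; rw [hD]
    -- letters before a in w' are not adjacent to a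
    have hkey : ∀ b ∈ u, ¬ G.Adj a b := by
      intro b hb hadj
      have hsub : [b, a].Sublist (u ++ a :: v) := by
        rw [List.sublist_append_iff]
        exact ⟨[b], [a], rfl, List.singleton_sublist.mpr hb, by simp⟩
      have : Dw G (a :: t) b a := (hDp b a).mpr ⟨hadj.symm, hsub⟩
      have hba : b ≠ a := fun h => G.irrefl (h ▸ hadj)
      have : [b, a].Sublist t := by
        cases this.2 with
        | cons _ h => exact h
        | cons_cons _ h => exact absurd rfl hba
      exact ha_t (this.subset (by simp))
    -- content equality for the tails
    have hmem : ∀ x, x ∈ (a :: t) ↔ x ∈ u ++ a :: v := by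
      intro x; rw [← List.mem_toFinset, hc, List.mem_toFinset]
    have hc' : t.toFinset = (u ++ v).toFinset := by
      ext x; simp only [List.mem_toFinset]
      constructor
      · intro hx
        have hxa : x ≠ a := fun h => ha_t (h ▸ hx)
        have h2 := (hmem x).mp (List.mem_cons_of_mem _ hx)
        simp only [List.mem_append, List.mem_cons] at h2 ⊢
        rcases h2 with h | h | h
        · exact Or.inl h
        · exact absurd h hxa
        · exact Or.inr h
      · intro hx
        have hxa : x ≠ a := fun h => hauv (h ▸ hx)
        have h2 : x ∈ u ++ a :: v := by
          simp only [List.mem_append, List.mem_cons] at hx ⊢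
          tauto
        exact (List.mem_cons.mp ((hmem x).mpr h2)).resolve_left hxa
    -- digraph equality for the tails
    have hD' : Dw G t = Dw G (u ++ v) := by
      funext x y
      apply propext
      constructor
      · rintro ⟨hadj, hsub⟩
        have hx : x ∈ t := hsub.subset (by simp)
        have hy : y ∈ t := hsub.subset (by simp)
        have : Dw G (u ++ a :: v) x y :=
          (hDp x y).mp ⟨hadj, hsub.trans (List.sublist_cons_self a t)⟩
        refine ⟨hadj, sublist_of_middle this.2 ?_⟩
        intro hm
        simp only [List.mem_cons, List.not_mem_nil, or_false] at hm
        rcases hm with rfl | rfl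
        · exact ha_t hx
        · exact ha_t hy
      · rintro ⟨hadj, hsub⟩
        have hx : x ∈ u ++ v := hsub.subset (by simp)
        have hsub' : [x, y].Sublist (u ++ a :: v) :=
          hsub.trans (List.Sublist.append_left (List.sublist_cons_self a v) u)
        have : Dw G (a :: t) x y := (hDp x y).mpr ⟨hadj, hsub'⟩
        have hxa : x ≠ a := fun h => hauv (h ▸ hx)
        refine ⟨hadj, ?_⟩
        cases this.2 with
        | cons _ h => exact h
        | cons_cons _ h => exact absurd rfl hxa
    have htail : Relation.EqvGen (CommStep G) t (u ++ v) := ih (u ++ v) ht huv hc' hD'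
    have h1 : Relation.EqvGen (CommStep G) (a :: t) (a :: (u ++ v)) :=
      eqvGen_cons G a htail
    have h2 : Relation.EqvGen (CommStep G) (u ++ a :: v) (a :: (u ++ v)) :=
      move_front G a u v hkey
    exact h1.trans _ _ _ h2.symm
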